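/- Let α ∈ ℝ with 0 < α < 1/2, let u, v, f, g : ℕ → ℝ be the sequences of the context, and set h(k) = 1/(f(k)·g(k)), w(0) = 0, w(k+1) = w(k) + h(k). Then for every k ≥ 1: |u(3k−1) − u(3k−2)| = |u(3k−2) − u(3k−3)|, |v(3k) − v(3k−1)| = |v(3k−1) − v(3k−2)|, and |w(3k+1) − w(3k)| = |w(3k) − w(3k−1)|. -/

import Mathlib

/-- `Π₁(k) = ∏_{j=1}^{k} (j+2α)/(j−α)`. -/
noncomputable def Pi1 (α : ℝ) (k : ℕ) : ℝ :=
  ∏ j ∈ Finset.range k, (((j : ℝ) + 1) + 2 * α) / (((j : ℝ) + 1) - α)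

/-- `Π₂(k) = ∏_{j=1}^{k} (j+α)/(j−2α)`. -/
noncomputable def Pi2 (α : ℝ) (k : ℕ) : ℝ :=
  ∏ j ∈ Finset.range k, (((j : ℝ) + 1) + α) / (((j : ℝ) + 1) - 2 * α)

/-- The axis values of the field `u`: `u(3k) = (2k/(k+2α))·Π₁(k)`,
`u(3k+1) = ((2k+2α)/(k+2α))·Π₁(k)`, `u(3k+2) = 2·Π₁(k)`. -/
noncomputable def uSeq (α : ℝ) (n : ℕ) : ℝ :=
  if n % 3 = 0 then (2 * ((n / 3 : ℕ) : ℝ) / (((n / 3 : ℕ) : ℝ) + 2 * α)) * Pi1 α (n / 3)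
  else if n % 3 = 1 then
    ((2 * ((n / 3 : ℕ) : ℝ) + 2 * α) / (((n / 3 : ℕ) : ℝ) + 2 * α)) * Pi1 α (n / 3)
  else 2 * Pi1 α (n / 3)

/-- The axis values of the field `f`: `f(0) = f(1) = 1` and
`f(3k−1) = f(3k) = f(3k+1) = (2α/(k+2α))·Π₁(k)` for `k ≥ 1`. -/
noncomputable def fSeq (α : ℝ) (n : ℕ) : ℝ :=
  if n ≤ 1 then 1
  else (2 * α / ((((n + 1) / 3 : ℕ) : ℝ) + 2 * α)) * Pi1 α ((n + 1) / 3)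

/-- The axis values of the field `v`: `v(3k) = (k/(k+α))·Π₂(k)`,
`v(3k+1) = Π₂(k)`, and `v(3k−1) = ((k−α)/(k+α))·Π₂(k)` for `k ≥ 1`. -/
noncomputable def vSeq (α : ℝ) (n : ℕ) : ℝ :=
  if n % 3 = 0 then (((n / 3 : ℕ) : ℝ) / (((n / 3 : ℕ) : ℝ) + α)) * Pi2 α (n / 3)
  else if n % 3 = 1 then Pi2 α (n / 3)
  else (((((n + 1) / 3 : ℕ) : ℝ) - α) / ((((n + 1) / 3 : ℕ) : ℝ) + α))
    * Pi2 α ((n + 1) / 3)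

/-- The axis values of the field `g`: `g(0) = 1` and
`g(3k−2) = g(3k−1) = g(3k) = (α/(k+α))·Π₂(k)` for `k ≥ 1`. -/
noncomputable def gSeq (α : ℝ) (n : ℕ) : ℝ :=
  if n = 0 then 1
  else (α / ((((n + 2) / 3 : ℕ) : ℝ) + α)) * Pi2 α ((n + 2) / 3)

/-- The third field `h(k) = 1/(f(k)·g(k))`. -/
noncomputable def hSeq (α : ℝ) (n : ℕ) : ℝ := 1 / (fSeq α n * gSeq α n)

/-- The potential `w` of the third field: `w(0) = 0`, `w(k+1) = w(k) + h(k)`. -/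
noncomputable def wSeq (α : ℝ) : ℕ → ℝ
  | 0 => 0
  | n + 1 => wSeq α n + hSeq α n

/-- The equidistance properties of the axis values of the isomonodromic
solution in the symmetric case `β = α`. -/
theorem axis_equidistance
    (α : ℝ) (hα0 : 0 < α) (hα : α < 1 / 2) :
    ∀ k : ℕ, 1 ≤ k →
      |uSeq α (3 * k - 1) - uSeq α (3 * k - 2)|
        = |uSeq α (3 * k - 2) - uSeq α (3 * k - 3)| ∧
      |vSeq α (3 * k) - vSeq α (3 * k - 1)|
        = |vSeq α (3 * k - 1) - vSeq α (3 * k - 2)| ∧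
      |wSeq α (3 * k + 1) - wSeq α (3 * k)|
        = |wSeq α (3 * k) - wSeq α (3 * k - 1)| := by
  intro k hk
  obtain ⟨m, rfl⟩ : ∃ m, k = m + 1 := ⟨k - 1, by omega⟩
  have hA : (3 * (m + 1) - 1) = 3 * m + 2 := by omega
  have hB : (3 * (m + 1) - 2) = 3 * m + 1 := by omega
  have hC : (3 * (m + 1) - 3) = 3 * m := by omega
  have hD : (3 * (m + 1)) = 3 * m + 3 := by omega
  have hd1 : ((m : ℝ) + 2 * α) ≠ 0 := by positivity
  have hd2 : ((m : ℝ) + 1 + α) ≠ 0 := by positivity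
  have hd3 : ((m : ℝ) + 1 - 2 * α) ≠ 0 := by
    have : (2 : ℝ) * α < 1 := by linarith
    have hm : (0 : ℝ) ≤ (m : ℝ) := Nat.cast_nonneg m
    nlinarith
  refine ⟨?_, ?_, ?_⟩
  · rw [hA, hB, hC]
    have e1 : (3 * m + 2) % 3 = 2 := by omega
    have e2 : (3 * m + 2) / 3 = m := by omega
    have e3 : (3 * m + 1) % 3 = 1 := by omega
    have e4 : (3 * m + 1) / 3 = m := by omega
    have e5 : (3 * m) % 3 = 0 := by omega
    have e6 : (3 * m) / 3 = m := by omega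
    simp only [uSeq, e1, e2, e3, e4, e5, e6]
    norm_num
    congr 1
    field_simp
    ring
  · rw [hB, hA, hD]
    have e1 : (3 * m + 3) % 3 = 0 := by omega
    have e2 : (3 * m + 3) / 3 = m + 1 := by omega
    have e3 : (3 * m + 2) % 3 = 2 := by omega
    have e4 : (3 * m + 2 + 1) / 3 = m + 1 := by omega
    have e5 : (3 * m + 1) % 3 = 1 := by omega
    have e6 : (3 * m + 1) / 3 = m := by omega
    simp only [vSeq, e1, e2, e3, e4, e5, e6]
    norm_num
    congr 1
    rw [Pi2, Pi2, Finset.prod_range_succ, ← Pi2]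
    push_cast
    field_simp
    rw [div_sub_one (by contrapose! hd3; linarith)]
    ring
  · rw [hA, hD]
    have hw : ∀ n, wSeq α (n + 1) = wSeq α n + hSeq α n := fun n => rfl
    have key : hSeq α (3 * m + 3) = hSeq α (3 * m + 2) := by
      have f1 : (3 * m + 3 + 1) / 3 = m + 1 := by omega
      have f2 : (3 * m + 2 + 1) / 3 = m + 1 := by omega
      have g1 : (3 * m + 3 + 2) / 3 = m + 1 := by omega
      have g2 : (3 * m + 2 + 2) / 3 = m + 1 := by omega
      have n1 : ¬ (3 * m + 3 ≤ 1) := by omega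
      have n2 : ¬ (3 * m + 2 ≤ 1) := by omega
      have n3 : 3 * m + 3 ≠ 0 := by omega
      have n4 : 3 * m + 2 ≠ 0 := by omega
      simp only [hSeq, fSeq, gSeq, if_neg n1, if_neg n2, if_neg n3, if_neg n4, f1, f2, g1, g2]
    have e1 : (3 * m + 3 : ℕ) = (3 * m + 2) + 1 := by omega
    rw [hw (3 * m + 3)]
    rw [e1, hw (3 * m + 2)]
    rw [key]
    ring_nf
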